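/- arXiv:2307.06941 — 5 statements merged into one kernel-verified Lean document; each statement's English description precedes it below -/
import Mathlib

section
/- The Shapley value of a player i equals the sum over all nonempty coalitions S containing i of Δ_S / |S|, where Δ_S are the Harsanyi dividends of the game. -/
open Finset

/-- The Shapley value of player `i`. -/
noncomputable def shapley {ι : Type*} [Fintype ι] [DecidableEq ι]
    (v : Finset ι → ℝ) (i : ι) : ℝ :=
  ∑ S ∈ (Finset.univ.erase i).powerset,
    ((Fintype.card ι : ℝ)⁻¹ * ((Fintype.card ι - 1).choose S.card : ℝ)⁻¹) *
      (v (insert i S) - v S)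

/-- The Harsanyi dividends of a game `v`, defined recursively by
`Δ_S = v(S) − Σ_{T ⊊ S, T ≠ ∅} Δ_T`. -/
noncomputable def dividend {ι : Type*} [DecidableEq ι]
    (v : Finset ι → ℝ) (S : Finset ι) : ℝ :=
  v S - ∑ T ∈ ((S.powerset.erase ∅).erase S).attach,
    dividend v T.1
termination_by S.card
decreasing_by
  have hT := T.2
  simp only [Finset.mem_erase, Finset.mem_powerset] at hT
  exact Finset.card_lt_card (lt_of_le_of_ne hT.2.2 hT.1)

lemma sum_dividend {ι : Type*} [DecidableEq ι] (v : Finset ι → ℝ) (hv : v ∅ = 0)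
    (S : Finset ι) : ∑ T ∈ S.powerset.erase ∅, dividend v T = v S := by
  rcases eq_or_ne S ∅ with rfl | hS
  · simp [hv]
  · have hmem : S ∈ S.powerset.erase ∅ := mem_erase.2 ⟨hS, mem_powerset_self S⟩
    rw [← Finset.sum_erase_add _ _ hmem]
    have := dividend.eq_1 v S
    rw [Finset.sum_attach] at this
    rw [this]
    ring

lemma marginal_dividend {ι : Type*} [DecidableEq ι] (v : Finset ι → ℝ) (hv : v ∅ = 0)
    (i : ι) (S : Finset ι) (hi : i ∉ S) :
    v (insert i S) - v S = ∑ R ∈ S.powerset, dividend v (insert i R) := by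
  classical
  set d := dividend v with hdname
  have hd := sum_dividend v hv
  rw [← hd (insert i S), ← hd S]
  rw [← Finset.sum_filter_add_sum_filter_not ((insert i S).powerset.erase ∅) (fun T => i ∈ T)]
  have h2 : ((insert i S).powerset.erase ∅).filter (fun T => i ∉ T) = S.powerset.erase ∅ := by
    ext T
    simp only [mem_filter, mem_erase, mem_powerset]
    constructor
    · rintro ⟨⟨hne, hsub⟩, hiT⟩
      exact ⟨hne, fun x hx => by
        rcases Finset.mem_insert.1 (hsub hx) with h | h
        · exact absurd (h ▸ hx) hiT
        · exact h⟩
    · rintro ⟨hne, hsub⟩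
      exact ⟨⟨hne, hsub.trans (subset_insert _ _)⟩, fun h => hi (hsub h)⟩
  rw [h2]
  have h1 : ∑ T ∈ ((insert i S).powerset.erase ∅).filter (fun T => i ∈ T), d T
      = ∑ R ∈ S.powerset, d (insert i R) := by
    refine Finset.sum_nbij' (fun T => T.erase i) (fun R => insert i R) ?_ ?_ ?_ ?_ ?_
    · intro T hT
      simp only [mem_filter, mem_erase, mem_powerset] at hT
      simp only [mem_powerset]
      intro x hx
      have := hT.1.2 (Finset.mem_of_mem_erase hx)
      rcases Finset.mem_insert.1 this with h | h
      · exact absurd h (Finset.ne_of_mem_erase hx)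
      · exact h
    · intro R hR
      simp only [mem_powerset] at hR
      simp only [mem_filter, mem_erase, mem_powerset]
      exact ⟨⟨Finset.insert_ne_empty _ _, insert_subset_insert _ hR⟩, mem_insert_self _ _⟩
    · intro T hT
      simp only [mem_filter] at hT
      exact Finset.insert_erase hT.2
    · intro R hR
      simp only [mem_powerset] at hR
      exact Finset.erase_insert (fun h => hi (hR h))
    · intro T hT
      simp only [mem_filter] at hT
      rw [Finset.insert_erase hT.2]
  rw [h1]; ring

lemma key_num (m r : ℕ) (hr : r ≤ m) :
    ∑ t ∈ Finset.range (m - r + 1),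
      (((m - r).choose t : ℝ)) * ((((m:ℝ)+1))⁻¹ * ((m.choose (r+t) : ℝ))⁻¹)
      = ((r:ℝ)+1)⁻¹ := by
  have hstep : ∀ t ∈ Finset.range (m - r + 1),
      (((m - r).choose t : ℝ)) * ((((m:ℝ)+1))⁻¹ * ((m.choose (r+t) : ℝ))⁻¹)
      = (((m:ℝ)+1))⁻¹ * ((m.choose r : ℝ))⁻¹ * (((r+t).choose r : ℝ)) := by
    intro t ht
    have ht' : t ≤ m - r := Nat.lt_succ_iff.1 (Finset.mem_range.1 ht)
    have h1 : r + t ≤ m := by omega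
    have h2 : m.choose (r+t) * (r+t).choose r = m.choose r * (m-r).choose t := by
      have := Nat.choose_mul (n := m) (Nat.le_add_right r t)
      simpa [Nat.add_sub_cancel_left] using this
    have h2' : (m.choose (r+t) : ℝ) * ((r+t).choose r : ℝ)
        = (m.choose r : ℝ) * ((m-r).choose t : ℝ) := by exact_mod_cast h2
    have hne1 : (m.choose (r+t) : ℝ) ≠ 0 := Nat.cast_ne_zero.2 (Nat.choose_pos h1).ne'
    have hne2 : (m.choose r : ℝ) ≠ 0 := Nat.cast_ne_zero.2 (Nat.choose_pos hr).ne'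
    have hm : ((m:ℝ)+1) ≠ 0 := by positivity
    field_simp
    linear_combination (-1:ℝ) * h2'
  rw [Finset.sum_congr rfl hstep, ← Finset.mul_sum]
  have hsum : ∑ t ∈ Finset.range (m - r + 1), (((r+t).choose r : ℝ))
      = (((m+1).choose (r+1) : ℕ) : ℝ) := by
    have : ∑ t ∈ Finset.range (m - r + 1), (r+t).choose r = (m+1).choose (r+1) := by
      rw [← Nat.sum_Icc_choose m r, ← Finset.Ico_add_one_right_eq_Icc, Finset.sum_Ico_eq_sum_range]
      have : m + 1 - r = m - r + 1 := by omega
      rw [this]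
    exact_mod_cast congrArg (Nat.cast (R := ℝ)) this
  rw [hsum]
  have hkey : ((m:ℝ)+1) * (m.choose r : ℝ) = (((m+1).choose (r+1) : ℕ) : ℝ) * ((r:ℝ)+1) := by
    have := Nat.add_one_mul_choose_eq m r
    exact_mod_cast this
  have hne2 : (m.choose r : ℝ) ≠ 0 := Nat.cast_ne_zero.2 (Nat.choose_pos hr).ne'
  have hne3 : (((m+1).choose (r+1) : ℕ) : ℝ) ≠ 0 :=
    Nat.cast_ne_zero.2 (Nat.choose_pos (by omega)).ne'
  have hm : ((m:ℝ)+1) ≠ 0 := by positivity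
  have hr1 : ((r:ℝ)+1) ≠ 0 := by positivity
  field_simp
  linarith [hkey]

lemma sum_powerset_card' {α : Type*} [DecidableEq α] (U : Finset α) (f : ℕ → ℝ) :
    ∑ T ∈ U.powerset, f T.card = ∑ t ∈ range (U.card + 1), (U.card.choose t : ℝ) * f t := by
  rw [Finset.sum_powerset_apply_card]
  simp only [nsmul_eq_mul]

lemma filter_superset_sum {α : Type*} [DecidableEq α] {R E : Finset α} (hRE : R ⊆ E)
    (g : ℕ → ℝ) :
    ∑ S ∈ E.powerset.filter (fun S => R ⊆ S), g S.card
      = ∑ T ∈ (E \ R).powerset, g (R.card + T.card) := by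
  refine Finset.sum_nbij' (fun S => S \ R) (fun T => R ∪ T) ?_ ?_ ?_ ?_ ?_
  · intro S hS
    simp only [mem_filter, mem_powerset] at hS
    exact Finset.mem_powerset.2 (Finset.sdiff_subset_sdiff hS.1 Finset.Subset.rfl)
  · intro T hT
    simp only [mem_powerset] at hT
    simp only [mem_filter, mem_powerset]
    exact ⟨Finset.union_subset hRE (hT.trans Finset.sdiff_subset), Finset.subset_union_left⟩
  · intro S hS
    simp only [mem_filter, mem_powerset] at hS
    exact Finset.union_sdiff_of_subset hS.2
  · intro T hT
    simp only [mem_powerset] at hT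
    have hd : Disjoint R T := Finset.disjoint_left.2 fun x hxR hxT =>
      (Finset.mem_sdiff.1 (hT hxT)).2 hxR
    rw [Finset.union_sdiff_cancel_left hd]
  · intro S hS
    simp only [mem_filter, mem_powerset] at hS
    have hd : Disjoint R (S \ R) := Finset.disjoint_sdiff
    rw [← Finset.card_union_of_disjoint hd, Finset.union_sdiff_of_subset hS.2]

/-- The Shapley value of player `i` equals the sum, over all nonempty coalitions
`S` containing `i`, of `Δ_S / |S|`. -/
theorem shapley_eq_sum_dividends {ι : Type*} [Fintype ι] [DecidableEq ι]
    (v : Finset ι → ℝ) (hv : v ∅ = 0) (i : ι) :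
    shapley v i =
      ∑ S ∈ (Finset.univ.powerset.erase ∅).filter (fun S => i ∈ S),
        dividend v S / S.card := by
  classical
  set n := Fintype.card ι with hn
  have hnpos : 0 < n := Fintype.card_pos_iff.2 ⟨i⟩
  set m := n - 1 with hm
  have hnm : n = m + 1 := by omega
  set E := (Finset.univ : Finset ι).erase i with hE
  have hEcard : E.card = m := by
    rw [hE, Finset.card_erase_of_mem (Finset.mem_univ i), Finset.card_univ, ← hn, hm]
  have hnot : ∀ S ∈ E.powerset, i ∉ S := by
    intro S hS
    exact fun h => (Finset.mem_erase.1 ((Finset.mem_powerset.1 hS) h)).1 rfl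
  have hcastn : (n : ℝ) = (m : ℝ) + 1 := by rw [hnm]; push_cast; ring
  -- Step 1: expand marginal contributions and swap summation order
  have step1 : shapley v i = ∑ R ∈ E.powerset,
      (∑ S ∈ E.powerset.filter (fun S => R ⊆ S),
        ((n : ℝ)⁻¹ * ((m.choose S.card : ℕ) : ℝ)⁻¹)) * dividend v (insert i R) := by
    rw [shapley]
    calc ∑ S ∈ E.powerset,
          ((n : ℝ)⁻¹ * (((n - 1).choose S.card : ℕ) : ℝ)⁻¹) * (v (insert i S) - v S)
        = ∑ S ∈ E.powerset, ∑ R ∈ S.powerset,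
            ((n : ℝ)⁻¹ * ((m.choose S.card : ℕ) : ℝ)⁻¹) * dividend v (insert i R) := by
          refine Finset.sum_congr rfl fun S hS => ?_
          rw [marginal_dividend v hv i S (hnot S hS), Finset.mul_sum, ← hm]
      _ = ∑ R ∈ E.powerset, ∑ S ∈ E.powerset.filter (fun S => R ⊆ S),
            ((n : ℝ)⁻¹ * ((m.choose S.card : ℕ) : ℝ)⁻¹) * dividend v (insert i R) := by
          refine Finset.sum_comm' fun S R => ?_
          simp only [mem_powerset, mem_filter]
          constructor
          · rintro ⟨h1, h2⟩; exact ⟨⟨h1, h2⟩, h2.trans h1⟩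
          · rintro ⟨⟨h1, h2⟩, h3⟩; exact ⟨h1, h2⟩
      _ = ∑ R ∈ E.powerset,
            (∑ S ∈ E.powerset.filter (fun S => R ⊆ S),
              ((n : ℝ)⁻¹ * ((m.choose S.card : ℕ) : ℝ)⁻¹)) * dividend v (insert i R) := by
          refine Finset.sum_congr rfl fun R _ => ?_
          rw [Finset.sum_mul]
  -- Step 2: evaluate the inner coefficient sum
  have step2 : ∀ R ∈ E.powerset,
      (∑ S ∈ E.powerset.filter (fun S => R ⊆ S),
        ((n : ℝ)⁻¹ * ((m.choose S.card : ℕ) : ℝ)⁻¹)) = ((R.card : ℝ) + 1)⁻¹ := by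
    intro R hR
    have hRE : R ⊆ E := Finset.mem_powerset.1 hR
    have hrm : R.card ≤ m := hEcard ▸ Finset.card_le_card hRE
    have hU : (E \ R).card = m - R.card := by rw [Finset.card_sdiff_of_subset hRE, hEcard]
    rw [filter_superset_sum hRE (fun s => (n : ℝ)⁻¹ * ((m.choose s : ℕ) : ℝ)⁻¹)]
    rw [sum_powerset_card' (E \ R) (fun t => (n : ℝ)⁻¹ * ((m.choose (R.card + t) : ℕ) : ℝ)⁻¹)]
    rw [hU, hcastn]
    exact key_num m R.card hrm
  rw [step1, Finset.sum_congr rfl fun R hR => by rw [step2 R hR]]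
  -- Step 3: reindex the right-hand side
  have step3 : ∑ S ∈ (Finset.univ.powerset.erase ∅).filter (fun S => i ∈ S),
        dividend v S / S.card
      = ∑ R ∈ E.powerset, dividend v (insert i R) / ((R.card : ℝ) + 1) := by
    refine Finset.sum_nbij' (fun S => S.erase i) (fun R => insert i R) ?_ ?_ ?_ ?_ ?_
    · intro S hS
      simp only [mem_filter, mem_erase, mem_powerset] at hS
      simp only [mem_powerset, hE]
      exact fun x hx => Finset.mem_erase.2 ⟨Finset.ne_of_mem_erase hx, Finset.mem_univ x⟩
    · intro R hR
      simp only [mem_powerset] at hR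
      simp only [mem_filter, mem_erase, mem_powerset]
      exact ⟨⟨Finset.insert_ne_empty _ _, Finset.subset_univ _⟩, mem_insert_self _ _⟩
    · intro S hS
      simp only [mem_filter] at hS
      exact Finset.insert_erase hS.2
    · intro R hR
      simp only [mem_powerset] at hR
      have hiR : i ∉ R := fun h => (Finset.mem_erase.1 (hE ▸ hR h)).1 rfl
      exact Finset.erase_insert hiR
    · intro S hS
      simp only [mem_filter] at hS
      rw [Finset.insert_erase hS.2]
      congr 1
      rw [Finset.card_erase_of_mem hS.2]
      have : 1 ≤ S.card := Finset.card_pos.2 ⟨i, hS.2⟩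
      push_cast [Nat.cast_sub this]
      ring
  rw [step3]
  refine Finset.sum_congr rfl fun R _ => ?_
  rw [div_eq_mul_inv, mul_comm]
end

section
/- A player i is a null player in a game v (with v(∅) = 0) if and only if all Harsanyi dividends Δ_S of coalitions S containing i are zero. -/
open Finset

lemma dividend_def {ι : Type*} [DecidableEq ι] (v : Finset ι → ℝ) (S : Finset ι) :
    dividend v S = v S - ∑ T ∈ ((S.powerset.erase ∅).erase S), dividend v T := by
  rw [dividend, Finset.sum_attach]

/-- A player `i` is null in a game `v` (with `v(∅) = 0`) iff all Harsanyi
dividends of coalitions containing `i` are zero. -/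
theorem null_player_iff_dividends_zero {ι : Type*} [Fintype ι] [DecidableEq ι]
    (v : Finset ι → ℝ) (hv : v ∅ = 0) (i : ι) :
    (∀ S : Finset ι, S ⊆ Finset.univ.erase i → v (insert i S) = v S) ↔
    (∀ S : Finset ι, i ∈ S → dividend v S = 0) := by
  constructor
  · intro hnull S
    induction S using Finset.strongInduction with
    | _ S IH =>
      intro hiS
      rw [dividend_def]
      have hfilter : ((S.powerset.erase ∅).erase S).filter (fun T => i ∈ T)
          ∪ ((S.powerset.erase ∅).erase S).filter (fun T => i ∉ T)
          = (S.powerset.erase ∅).erase S := Finset.filter_union_filter_not_eq _ _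
      rw [← hfilter, Finset.sum_union (Finset.disjoint_filter_filter_not _ _ _)]
      have h1 : ∑ T ∈ ((S.powerset.erase ∅).erase S).filter (fun T => i ∈ T),
          dividend v T = 0 := by
        apply Finset.sum_eq_zero
        intro T hT
        simp only [Finset.mem_filter, Finset.mem_erase, Finset.mem_powerset] at hT
        exact IH T (lt_of_le_of_ne hT.1.2.2 hT.1.1) hT.2
      have h2 : ((S.powerset.erase ∅).erase S).filter (fun T => i ∉ T)
          = (S.erase i).powerset.erase ∅ := by
        ext T
        simp only [Finset.mem_filter, Finset.mem_erase, Finset.mem_powerset,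
          Finset.subset_erase]
        constructor
        · rintro ⟨⟨_, hTne, hTS⟩, hiT⟩
          exact ⟨hTne, hTS, hiT⟩
        · rintro ⟨hTne, hTS, hiT⟩
          refine ⟨⟨?_, hTne, hTS⟩, hiT⟩
          rintro rfl; exact hiT hiS
      rw [h1, h2, sum_dividend v hv]
      have hv2 : v S = v (S.erase i) := by
        have := hnull (S.erase i) (by
          intro x hx
          simp only [Finset.mem_erase] at hx ⊢
          exact ⟨hx.1, Finset.mem_univ x⟩)
        rw [Finset.insert_erase hiS] at this
        exact this
      rw [hv2]; ring
  · intro hdiv S hS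
    have hiS : i ∉ S := fun h => (Finset.mem_erase.mp (hS h)).1 rfl
    rw [← sum_dividend v hv (insert i S), ← sum_dividend v hv S]
    rw [← Finset.filter_union_filter_not_eq (fun T => i ∈ T)
      ((insert i S).powerset.erase ∅),
      Finset.sum_union (Finset.disjoint_filter_filter_not _ _ _)]
    have h1 : ∑ T ∈ ((insert i S).powerset.erase ∅).filter (fun T => i ∈ T),
        dividend v T = 0 := by
      apply Finset.sum_eq_zero
      intro T hT
      simp only [Finset.mem_filter] at hT
      exact hdiv T hT.2
    have h2 : ((insert i S).powerset.erase ∅).filter (fun T => i ∉ T)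
        = S.powerset.erase ∅ := by
      ext T
      simp only [Finset.mem_filter, Finset.mem_erase, Finset.mem_powerset]
      constructor
      · rintro ⟨⟨hTne, hTsub⟩, hiT⟩
        refine ⟨hTne, fun x hx => ?_⟩
        rcases Finset.mem_insert.mp (hTsub hx) with rfl | h
        · exact absurd hx hiT
        · exact h
      · rintro ⟨hTne, hTS⟩
        exact ⟨⟨hTne, hTS.trans (Finset.subset_insert _ _)⟩,
          fun h => hiS (hTS h)⟩
    rw [h1, h2, zero_add]
end

section
/- Let x be a query instance with F(x) = 1 and x' a maximally sparse counterfactual with modified feature set C = {i : x_i ≠ x'_i}. Then in the single-reference game v(S) = F(⟨x_S, x'_{F\S}⟩), the Shapley value of each feature i ∈ C equals 1/|C| and the Shapley value of each feature i ∉ C equals 0. -/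
open Finset

/-- `blend x x' S = ⟨x_S, x'_{F∖S}⟩`: the input taking `x`'s values on features
in `S` and `x'`'s values elsewhere. -/
def blend {m : ℕ} (x x' : Fin m → ℝ) (S : Finset (Fin m)) : Fin m → ℝ :=
  fun i => if i ∈ S then x i else x' i

lemma ratio_sum : ∀ (a b : ℕ), a ≤ b →
    ∑ k ∈ range (a+1), (a.choose k : ℝ)/(b.choose k) = ((b:ℝ)+1)/((b:ℝ)+1-a) := by
  intro a
  induction a with
  | zero =>
    intro b _
    simp only [Nat.cast_zero, sub_zero]
    rw [div_self (by positivity)]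
    simp
  | succ a ih =>
    intro b hab
    obtain ⟨b', rfl⟩ : ∃ b', b = b'+1 := ⟨b-1, by omega⟩
    have hab' : a ≤ b' := by omega
    rw [Finset.sum_range_succ']
    have key : ∀ j ∈ range (a+1),
        ((a+1).choose (j+1) : ℝ)/((b'+1).choose (j+1))
          = ((a:ℝ)+1)/((b':ℝ)+1) * ((a.choose j : ℝ)/(b'.choose j)) := by
      intro j hj
      have hj' : j ≤ a := by simpa using Nat.lt_succ_iff.mp (mem_range.mp hj)
      have h1 : ((a+1 : ℕ) : ℝ) * (a.choose j : ℝ) = ((a+1).choose (j+1) : ℝ) * ((j:ℝ)+1) := by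
        exact_mod_cast congrArg (Nat.cast : ℕ → ℝ) (Nat.add_one_mul_choose_eq a j)
      have h2 : ((b'+1 : ℕ) : ℝ) * (b'.choose j : ℝ) = ((b'+1).choose (j+1) : ℝ) * ((j:ℝ)+1) := by
        exact_mod_cast congrArg (Nat.cast : ℕ → ℝ) (Nat.add_one_mul_choose_eq b' j)
      have hc : (0:ℝ) < (b'.choose j : ℝ) := by
        exact_mod_cast Nat.choose_pos (hj'.trans hab')
      have hc2 : (0:ℝ) < ((b'+1).choose (j+1) : ℝ) := by
        exact_mod_cast Nat.choose_pos (by omega : j+1 ≤ b'+1)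
      push_cast at h1 h2 ⊢
      field_simp
      nlinarith [h1, h2, hc, hc2]
    rw [Finset.sum_congr rfl key, ← Finset.mul_sum, ih b' hab']
    have h3 : ((b':ℝ)+1-a) ≠ 0 := by
      have : (a:ℝ) ≤ b' := by exact_mod_cast hab'
      linarith
    have h4 : ((b':ℝ)+1) ≠ 0 := by positivity
    have : ((a+1).choose 0 : ℝ)/((b'+1).choose 0) = 1 := by simp
    rw [this]
    push_cast
    field_simp
    rw [show (b':ℝ)+1+1-(a+1) = b'+1-a by ring, mul_div_cancel_left₀ _ h3]
    ring

/-- Stmt 9: for a maximally sparse counterfactual `x'` with modified feature set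
`C`, in the single-reference game `v(S) = F(⟨x_S, x'_{F∖S}⟩)` the Shapley value
of each feature in `C` is `1/|C|`, and `0` outside `C`. -/
theorem shapley_single_reference_maximally_sparse {m : ℕ}
    (F : (Fin m → ℝ) → ℝ) (hbin : ∀ z, F z = 0 ∨ F z = 1)
    (x x' : Fin m → ℝ) (hx : F x = 1) (hx' : F x' = 0)
    (C : Finset (Fin m)) (hC : C = Finset.univ.filter (fun i => x i ≠ x' i))
    (hms : ∀ S : Finset (Fin m), S ⊆ C → S ≠ ∅ → F (blend x x' S) ≠ F x') :
    (∀ i ∈ C, shapley (fun S => F (blend x x' S)) i = (C.card : ℝ)⁻¹) ∧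
    (∀ i ∉ C, shapley (fun S => F (blend x x' S)) i = 0) := by
  have hmemC : ∀ i : Fin m, i ∈ C ↔ x i ≠ x' i := by
    intro i; rw [hC]; simp
  -- the value of the game depends only on whether S ∩ C = ∅
  have hv : ∀ S : Finset (Fin m), F (blend x x' S) = if S ∩ C = ∅ then 0 else 1 := by
    intro S
    by_cases h : S ∩ C = ∅
    · have hb : blend x x' S = x' := by
        funext j
        simp only [blend]
        split_ifs with hj
        · by_contra hne
          have hjC : j ∈ C := (hmemC j).mpr hne
          exact (Finset.eq_empty_iff_forall_notMem.mp h j) (mem_inter.mpr ⟨hj, hjC⟩)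
        · rfl
      rw [hb, hx', if_pos h]
    · have hb : blend x x' S = blend x x' (S ∩ C) := by
        funext j
        simp only [blend, mem_inter]
        by_cases hjS : j ∈ S
        · by_cases hjC : j ∈ C
          · simp [hjS, hjC]
          · have hxj : x j = x' j := by
              by_contra hne; exact hjC ((hmemC j).mpr hne)
            simp [hjS, hjC, hxj]
        · simp [hjS]
      rw [if_neg h, hb]
      have hne := hms (S ∩ C) inter_subset_right h
      rw [hx'] at hne
      rcases hbin (blend x x' (S ∩ C)) with h0 | h1
      · exact absurd h0 hne
      · exact h1
  constructor
  · -- i ∈ C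
    intro i hi
    have hm1 : 1 ≤ m := Nat.pos_of_ne_zero (by rintro rfl; exact i.elim0)
    have hc1 : 1 ≤ C.card := card_pos.mpr ⟨i, hi⟩
    have hcm : C.card ≤ m := by
      simpa using card_le_card (subset_univ C)
    unfold shapley
    simp only [Fintype.card_fin]
    have step : ∀ S ∈ (univ.erase i).powerset,
        ((m : ℝ)⁻¹ * (((m - 1).choose S.card : ℕ) : ℝ)⁻¹) *
            (F (blend x x' (insert i S)) - F (blend x x' S))
          = if S ∩ C = ∅ then (m : ℝ)⁻¹ * (((m - 1).choose S.card : ℕ) : ℝ)⁻¹ else 0 := by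
      intro S _
      have h1 : insert i S ∩ C ≠ ∅ := by
        intro h
        exact (Finset.eq_empty_iff_forall_notMem.mp h i)
          (mem_inter.mpr ⟨mem_insert_self i S, hi⟩)
      rw [hv, hv, if_neg h1]
      by_cases h : S ∩ C = ∅ <;> simp [h]
    rw [Finset.sum_congr rfl step, ← Finset.sum_filter]
    have hset : ((univ.erase i).powerset.filter (fun S => S ∩ C = ∅)) = (univ \ C).powerset := by
      ext S
      simp only [mem_filter, mem_powerset, subset_erase, subset_sdiff, subset_univ, true_and,
        ← disjoint_iff_inter_eq_empty]
      constructor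
      · tauto
      · intro hd
        refine ⟨?_, hd⟩
        intro hiS
        exact (disjoint_left.mp hd hiS) hi
    rw [hset]
    have hcard : (univ \ C).card = m - C.card := by
      rw [card_sdiff_of_subset (subset_univ C)]; simp
    rw [powerset_card_disjiUnion]
    erw [Finset.sum_disjiUnion]
    rw [hcard]
    have inner : ∀ k ∈ range (m - C.card + 1),
        (∑ S ∈ (univ \ C).powersetCard k,
          (m : ℝ)⁻¹ * (((m - 1).choose S.card : ℕ) : ℝ)⁻¹)
        = ((m - C.card).choose k : ℝ) * ((m : ℝ)⁻¹ * (((m - 1).choose k : ℕ) : ℝ)⁻¹) := by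
      intro k _
      rw [Finset.sum_congr rfl (fun S hS => by
        rw [(mem_powersetCard.mp hS).2]), Finset.sum_const, card_powersetCard, hcard]
      simp [nsmul_eq_mul]
    rw [Finset.sum_congr rfl inner]
    have hab : m - C.card ≤ m - 1 := by omega
    have hrs := ratio_sum (m - C.card) (m - 1) hab
    have e1 : ∀ k, ((m - C.card).choose k : ℝ) * ((m : ℝ)⁻¹ * (((m - 1).choose k : ℕ) : ℝ)⁻¹)
        = (m : ℝ)⁻¹ * (((m - C.card).choose k : ℝ) / (((m - 1).choose k : ℕ) : ℝ)) := by
      intro k; rw [div_eq_mul_inv]; ring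
    simp only [e1]
    rw [← Finset.mul_sum, hrs]
    have c1 : ((m - 1 : ℕ) : ℝ) = (m : ℝ) - 1 := by
      rw [Nat.cast_sub hm1]; simp
    have c2 : ((m - C.card : ℕ) : ℝ) = (m : ℝ) - C.card := by
      rw [Nat.cast_sub hcm]
    rw [c1, c2]
    have hm0 : (m : ℝ) ≠ 0 := by positivity
    have hc0 : (C.card : ℝ) ≠ 0 := by
      exact_mod_cast Nat.one_le_iff_ne_zero.mp hc1
    field_simp
    rw [show (m:ℝ)-1+1-(m-C.card) = C.card by ring, show (m:ℝ)-1+1 = m by ring,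
      mul_div_cancel_right₀ _ hc0]
  · -- i ∉ C
    intro i hi
    unfold shapley
    apply Finset.sum_eq_zero
    intro S _
    have : insert i S ∩ C = S ∩ C := by
      rw [Finset.insert_inter_of_notMem hi]
    simp only [hv]
    rw [this, sub_self, mul_zero]
end

section
/- Theorem 4.2 (Maximal sparsity implies equivalence): If all counterfactuals in a finite set X' are maximally sparse for the query instance x, then the Bin-CF-SHAP values (average over x' ∈ X' of the Shapley values of the single-reference games v_{x'}(S) = F(⟨x_S, x'_{F\S}⟩)) coincide with the Norm-CF-Freq explanation ψ̂_i = (1/|X'|) Σ_{x' ∈ X'} 𝟙[x_i ≠ x'_i] / |{j : x_j ≠ x'_j}|. -/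
open Finset

lemma key_sum (M n : ℕ) (h : n ≤ M) :
    ∑ s ∈ range (n+1), ((n.choose s : ℝ) / (M.choose s)) = ((M:ℝ)+1) / ((M:ℝ)+1-n) := by
  have h1 : ∀ s ∈ range (n+1), ((n.choose s : ℝ) / (M.choose s))
      = (((M-s).choose (M-n) : ℝ)) / (M.choose n) := by
    intro s hs
    rw [mem_range, Nat.lt_succ_iff] at hs
    have hid := Nat.choose_mul (n := M) hs
    have hsymm : (M-s).choose (n-s) = (M-s).choose (M-n) := by
      have : (M-s) - (n-s) = M - n := by omega
      rw [← this, Nat.choose_symm (by omega)]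
    rw [hsymm] at hid
    have hMs : (0:ℝ) < (M.choose s : ℝ) := by
      exact_mod_cast Nat.choose_pos (le_trans hs h)
    have hMn : (0:ℝ) < (M.choose n : ℝ) := by exact_mod_cast Nat.choose_pos h
    rw [div_eq_div_iff hMs.ne' hMn.ne']
    have := congrArg (Nat.cast (R := ℝ)) hid
    push_cast at this
    linarith
  rw [sum_congr rfl h1]
  have h2 : ∑ s ∈ range (n+1), ((M-s).choose (M-n) : ℝ)
      = ((M+1).choose n : ℝ) := by
    have h3 : ∑ s ∈ range (n+1), (M-s).choose (M-n) = (M+1).choose n := by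
      have := Nat.sum_Icc_choose M (M-n)
      have hre : ∑ s ∈ range (n+1), (M-s).choose (M-n)
          = ∑ i ∈ Icc (M-n) M, i.choose (M-n) := by
        apply Finset.sum_bij' (fun s _ => M - s) (fun i _ => M - i)
        · intro s hs; rw [mem_range, Nat.lt_succ_iff] at hs; rw [mem_Icc]; omega
        · intro i hi; rw [mem_Icc] at hi; rw [mem_range]; omega
        · intro s hs; rw [mem_range, Nat.lt_succ_iff] at hs; omega
        · intro i hi; rw [mem_Icc] at hi; omega
        · intro s hs; rfl
      rw [hre, this]
      have : M - n + 1 = (M+1) - n := by omega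
      rw [this, Nat.choose_symm (by omega)]
    exact_mod_cast h3
  rw [← sum_div, h2]
  have hid := Nat.choose_mul_succ_eq M n
  have hMn : (0:ℝ) < (M.choose n : ℝ) := by exact_mod_cast Nat.choose_pos h
  have hpos : (0:ℝ) < (M:ℝ) + 1 - n := by
    have : (n:ℝ) ≤ M := by exact_mod_cast h
    linarith
  rw [div_eq_div_iff hMn.ne' hpos.ne']
  have : ((M+1:ℕ) - n : ℕ) = (M + 1) - n := rfl
  have hcast : (((M+1) - n : ℕ) : ℝ) = (M:ℝ) + 1 - n := by
    push_cast [Nat.cast_sub (by omega : n ≤ M+1)]; ring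
  calc ((M+1).choose n : ℝ) * ((M:ℝ)+1-n) = (((M+1).choose n * ((M+1) - n) : ℕ) : ℝ) := by
        push_cast [hcast]; ring
    _ = ((M.choose n * (M+1) : ℕ) : ℝ) := by rw [← hid]
    _ = ((M:ℝ)+1) * (M.choose n : ℝ) := by push_cast; ring

lemma shapley_smul_sum {ι κ : Type*} [Fintype ι] [DecidableEq ι] [Fintype κ]
    (a : ℝ) (v : κ → Finset ι → ℝ) (i : ι) :
    shapley (fun S => a * ∑ k, v k S) i = a * ∑ k, shapley (v k) i := by
  unfold shapley
  simp only [← mul_sub, ← sum_sub_distrib, mul_sum]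
  rw [sum_comm]
  exact sum_congr rfl fun k _ => sum_congr rfl fun S _ => by ring

lemma shapley_indicator {m : ℕ} (C : Finset (Fin m)) (i : Fin m) :
    shapley (fun S => if (S ∩ C).Nonempty then (1:ℝ) else 0) i
      = (if i ∈ C then 1 else 0) / C.card := by
  by_cases hi : i ∈ C
  · rw [if_pos hi]
    have hm : 0 < m := i.pos
    have hc : 0 < C.card := card_pos.2 ⟨i, hi⟩
    have hcm : C.card ≤ m := by
      simpa using card_le_card (subset_univ C)
    unfold shapley
    have hterm : ∀ S ∈ (Finset.univ.erase i).powerset,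
        ((Fintype.card (Fin m) : ℝ)⁻¹ * ((Fintype.card (Fin m) - 1).choose S.card : ℝ)⁻¹) *
        ((if ((insert i S) ∩ C).Nonempty then (1:ℝ) else 0) -
          (if (S ∩ C).Nonempty then (1:ℝ) else 0))
        = if S ⊆ Finset.univ \ C then
            ((m : ℝ)⁻¹ * ((m - 1).choose S.card : ℝ)⁻¹) else 0 := by
      intro S hS
      rw [mem_powerset] at hS
      have hins : ((insert i S) ∩ C).Nonempty := ⟨i, by simp [hi]⟩
      rw [if_pos hins]
      by_cases hSC : (S ∩ C).Nonempty
      · rw [if_pos hSC, if_neg, sub_self, mul_zero]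
        intro hsub
        obtain ⟨j, hj⟩ := hSC
        rw [mem_inter] at hj
        have := hsub hj.1
        rw [mem_sdiff] at this
        exact this.2 hj.2
      · rw [if_neg hSC, if_pos, sub_zero, mul_one, Fintype.card_fin]
        intro j hj
        rw [mem_sdiff]
        exact ⟨mem_univ j, fun hjC => hSC ⟨j, mem_inter.2 ⟨hj, hjC⟩⟩⟩
    rw [sum_congr rfl hterm, sum_ite, sum_const_zero, add_zero]
    have hfil : (Finset.univ.erase i).powerset.filter (fun S => S ⊆ Finset.univ \ C)
        = (Finset.univ \ C).powerset := by
      ext S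
      simp only [mem_filter, mem_powerset]
      constructor
      · rintro ⟨-, h2⟩; exact h2
      · intro h
        refine ⟨fun j hj => ?_, h⟩
        have := h hj
        rw [mem_sdiff] at this
        exact mem_erase.2 ⟨fun he => this.2 (he ▸ hi), mem_univ j⟩
    rw [hfil, Finset.sum_powerset_apply_card (fun s => (m : ℝ)⁻¹ * ((m - 1).choose s : ℝ)⁻¹)]
    have hcard : (Finset.univ \ C).card = m - C.card := by
      rw [card_sdiff_of_subset (subset_univ C), card_univ, Fintype.card_fin]
    rw [hcard]
    have : ∀ s ∈ range (m - C.card + 1),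
        ((m - C.card).choose s) • ((m : ℝ)⁻¹ * ((m - 1).choose s : ℝ)⁻¹)
        = (m:ℝ)⁻¹ * (((m - C.card).choose s : ℝ) / ((m - 1).choose s : ℝ)) := by
      intro s _
      rw [nsmul_eq_mul]
      ring
    rw [sum_congr rfl this, ← mul_sum, key_sum (m-1) (m - C.card) (by omega)]
    have h1 : ((m-1:ℕ):ℝ) + 1 = (m:ℝ) := by
      have : ((m-1:ℕ):ℝ) = (m:ℝ) - 1 := by push_cast [Nat.cast_sub hm]; ring
      rw [this]; ring
    have h2 : ((m - C.card : ℕ) : ℝ) = (m:ℝ) - C.card := by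
      push_cast [Nat.cast_sub hcm]; ring
    rw [h1, h2]
    have hm' : (0:ℝ) < m := by exact_mod_cast hm
    have hc' : (0:ℝ) < C.card := by exact_mod_cast hc
    field_simp
    rw [sub_sub_cancel, div_self hc'.ne']
  · rw [if_neg hi]
    unfold shapley
    rw [zero_div]
    apply sum_eq_zero
    intro S hS
    have : (insert i S) ∩ C = S ∩ C := by
      ext j
      simp only [mem_inter, mem_insert]
      constructor
      · rintro ⟨h1 | h1, h2⟩
        · exact absurd (h1 ▸ h2) hi
        · exact ⟨h1, h2⟩
      · rintro ⟨h1, h2⟩; exact ⟨Or.inr h1, h2⟩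
    simp only [this, sub_self, mul_zero]

/-- Stmt 11 (Theorem 4.2): if all counterfactuals in the finite set
`{cf k | k : κ}` are maximally sparse for `x`, then the Bin-CF-SHAP values
(Shapley values of `v(S) = (1/|X'|) Σ_{x'} F(⟨x_S, x'_{F∖S}⟩)`) coincide with
the Norm-CF-Freq explanation
`ψ̂_i = (1/|X'|) Σ_{x'} 𝟙[x_i ≠ x'_i] / |{j : x_j ≠ x'_j}|`. -/
theorem binCFSHAP_eq_normCFFreq_of_maximally_sparse {m : ℕ}
    (F : (Fin m → ℝ) → ℝ) (hbin : ∀ z, F z = 0 ∨ F z = 1)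
    (x : Fin m → ℝ) (hx : F x = 1)
    {κ : Type*} [Fintype κ] [Nonempty κ] (cf : κ → Fin m → ℝ)
    (hcf : ∀ k, F (cf k) = 0)
    (hms : ∀ k, ∀ S : Finset (Fin m),
      S ⊆ Finset.univ.filter (fun i => x i ≠ cf k i) → S ≠ ∅ →
      F (blend x (cf k) S) ≠ F (cf k)) :
    ∀ i : Fin m,
      shapley (fun S => (Fintype.card κ : ℝ)⁻¹ * ∑ k, F (blend x (cf k) S)) i =
      (Fintype.card κ : ℝ)⁻¹ * ∑ k, (if x i ≠ cf k i then 1 else 0) /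
        ((Finset.univ.filter (fun j => x j ≠ cf k j)).card : ℝ) := by
  intro i
  set C : κ → Finset (Fin m) := fun k => Finset.univ.filter (fun j => x j ≠ cf k j) with hC
  have hval : ∀ k (S : Finset (Fin m)),
      F (blend x (cf k) S) = if (S ∩ C k).Nonempty then (1:ℝ) else 0 := by
    intro k S
    have hblend : blend x (cf k) S = blend x (cf k) (S ∩ C k) := by
      funext j
      simp only [blend, mem_inter]
      by_cases hjS : j ∈ S
      · by_cases hjC : j ∈ C k
        · simp [hjS, hjC]
        · have hxj : x j = cf k j := by
            by_contra hne
            exact hjC (mem_filter.2 ⟨mem_univ j, hne⟩)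
          simp [hjS, hjC, hxj]
      · simp [hjS]
    by_cases hne : (S ∩ C k).Nonempty
    · rw [if_pos hne]
      have := hms k (S ∩ C k) inter_subset_right (nonempty_iff_ne_empty.1 hne)
      rw [hcf k, ← hblend] at this
      rcases hbin (blend x (cf k) S) with h | h
      · exact absurd h this
      · exact h
    · rw [if_neg hne]
      rw [not_nonempty_iff_eq_empty] at hne
      have : blend x (cf k) (S ∩ C k) = cf k := by
        funext j; simp [blend, hne]
      rw [hblend, this, hcf k]
  have hfun : (fun S => (Fintype.card κ : ℝ)⁻¹ * ∑ k, F (blend x (cf k) S))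
      = fun S => (Fintype.card κ : ℝ)⁻¹ *
          ∑ k, (if (S ∩ C k).Nonempty then (1:ℝ) else 0) := by
    funext S
    congr 1
    exact Finset.sum_congr rfl fun k _ => hval k S
  rw [hfun, shapley_smul_sum (Fintype.card κ : ℝ)⁻¹
      (fun k S => if (S ∩ C k).Nonempty then (1:ℝ) else 0) i]
  congr 1
  apply Finset.sum_congr rfl
  intro k _
  rw [shapley_indicator (C k) i]
  congr 1
  simp [hC, mem_filter]
end

section
/- If x' is a counterfactual for x whose modified feature set is a singleton C = {i}, then the Shapley value of feature i in the single-reference game v(S) = F(⟨x_S, x'_{F\S}⟩) equals F(x) − F(x') (i.e., equals 1 when F(x)=1, F(x')=0), and all other features have Shapley value 0. -/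
set_option maxHeartbeats 1000000
open Finset

lemma blend_eq {m : ℕ} (x x' : Fin m → ℝ) (i : Fin m)
    (hothers : ∀ j, j ≠ i → x j = x' j) (S : Finset (Fin m)) :
    blend x x' S = if i ∈ S then x else x' := by
  funext j
  by_cases hj : j = i
  · subst hj; by_cases h : j ∈ S <;> simp [blend, h]
  · by_cases h : j ∈ S <;> by_cases h' : i ∈ S <;>
      simp [blend, h, h', hothers j hj]

/-- Stmt 14: if the counterfactual `x'` differs from `x` in exactly one feature
`i`, then in the single-reference game `v(S) = F(⟨x_S, x'_{F∖S}⟩)` the Shapley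
value of `i` is `F(x) − F(x')` and all other features get `0`. -/
theorem shapley_singleton_counterfactual {m : ℕ}
    (F : (Fin m → ℝ) → ℝ) (hbin : ∀ z, F z = 0 ∨ F z = 1)
    (x x' : Fin m → ℝ) (hx : F x = 1) (hx' : F x' = 0)
    (i : Fin m) (hi : x i ≠ x' i) (hothers : ∀ j, j ≠ i → x j = x' j) :
    shapley (fun S => F (blend x x' S)) i = F x - F x' ∧
    ∀ j, j ≠ i → shapley (fun S => F (blend x x' S)) j = 0 := by
  have hv : ∀ S : Finset (Fin m), F (blend x x' S) = if i ∈ S then 1 else 0 := by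
    intro S
    rw [blend_eq x x' i hothers]
    by_cases h : i ∈ S <;> simp [h, hx, hx']
  constructor
  · rw [hx, hx']
    unfold shapley
    have key : ∀ S ∈ (Finset.univ.erase i).powerset,
        ((Fintype.card (Fin m) : ℝ)⁻¹ * ((Fintype.card (Fin m) - 1).choose S.card : ℝ)⁻¹) *
          ((fun S => F (blend x x' S)) (insert i S) - (fun S => F (blend x x' S)) S)
        = (m : ℝ)⁻¹ * (((m - 1).choose S.card : ℝ)⁻¹) := by
      intro S hS
      have hiS : i ∉ S := fun h =>
        (Finset.mem_erase.1 (Finset.mem_powerset.1 hS h)).1 rfl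
      simp [hv, hiS]
    rw [Finset.sum_congr rfl key]
    have hm : 0 < m := i.pos
    have hcard : (Finset.univ.erase i).card = m - 1 := by
      simp [Finset.card_erase_of_mem]
    rw [← Finset.mul_sum]
    have : ∑ S ∈ (Finset.univ.erase i).powerset, (((m - 1).choose S.card : ℝ)⁻¹)
        = ∑ k ∈ Finset.range ((m-1) + 1), ((m-1).choose k) • (((m - 1).choose k : ℝ)⁻¹) := by
      rw [Finset.sum_powerset_apply_card (fun k => ((m-1).choose k : ℝ)⁻¹), hcard]
    rw [this]
    have hsum : ∑ k ∈ Finset.range ((m-1) + 1), ((m-1).choose k) • (((m - 1).choose k : ℝ)⁻¹)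
        = m := by
      have : ∀ k ∈ Finset.range ((m-1) + 1),
          ((m-1).choose k) • (((m - 1).choose k : ℝ)⁻¹) = 1 := by
        intro k hk
        have h0 : 0 < (m-1).choose k :=
          Nat.choose_pos (Nat.lt_succ_iff.1 (Finset.mem_range.1 hk))
        rw [nsmul_eq_mul, mul_inv_cancel₀ (by exact_mod_cast h0.ne')]
      rw [Finset.sum_congr rfl this, Finset.sum_const, Finset.card_range]
      simp [Nat.sub_add_cancel hm]
    rw [hsum, inv_mul_cancel₀ (by exact_mod_cast hm.ne')]
    norm_num
  · intro j hj
    unfold shapley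
    apply Finset.sum_eq_zero
    intro S hS
    have hij : i ∈ insert j S ↔ i ∈ S := by
      have : i ≠ j := fun h => hj h.symm
      simp [Finset.mem_insert, this]
    by_cases h : i ∈ S <;> simp [hv, h, hij.2, hij]
end
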